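/- Let t ≥ 2 and let G be an n-vertex graph with at least t·n^t·p^{C(t,2)} copies of K_t, and with at most n^i·p^{C(i,2)} copies of K_i for every 1 ≤ i < t, where p > 0. Let 𝒢 be the t-complex of all cliques of G on at most t vertices. Then there exists a sub-t-complex 𝒢' ⊆ 𝒢 such that for every i < t and every K ∈ 𝒢'_i, the number of t-sets of 𝒢'_t containing K is at least n^{t−i}·p^{C(t,2)−C(i,2)}, and |𝒢'_t| ≥ n^t·p^{C(t,2)}. -/
import Mathlib


open Finset

/-- Pruning lemma for clique complexes: if an `n`-vertex graph has at least
`t·n^t·p^{C(t,2)}` copies of `K_t` and at most `n^i·p^{C(i,2)}` copies of `K_i` for all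
`1 ≤ i < t`, then the `t`-complex of its cliques of size at most `t` has a sub-`t`-complex
`𝒢'` in which every set of size `i < t` has degree (number of `t`-sets of `𝒢'` containing
it) at least `n^{t-i}·p^{C(t,2)-C(i,2)}`, and the top level has at least `n^t·p^{C(t,2)}`
sets. -/
theorem prune_terminal {V : Type*} [Fintype V] [DecidableEq V]
    (G : SimpleGraph V) [DecidableRel G.Adj] (t : ℕ) (ht : 2 ≤ t) (p : ℝ) (hp : 0 < p)
    (hKi : ∀ i, 1 ≤ i → i < t →
      ((G.cliqueFinset i).card : ℝ) ≤ (Fintype.card V : ℝ) ^ i * p ^ i.choose 2)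
    (T R : Finset (Finset V))
    (hR : ∀ K ∈ R, K.Nonempty ∧ K.card < t ∧
        T.filter (fun L => K ⊆ L) = ∅ ∧ K ∈ G.cliqueFinset K.card)
    (hbound : (t : ℝ) * (Fintype.card V : ℝ) ^ t * p ^ t.choose 2 ≤
        (T.card : ℝ) + ∑ K ∈ R, (Fintype.card V : ℝ) ^ (t - K.card) *
          p ^ (t.choose 2 - K.card.choose 2)) :
    (Fintype.card V : ℝ) ^ t * p ^ t.choose 2 ≤ (T.card : ℝ) := by
  set n : ℝ := (Fintype.card V : ℝ) with hn
  have hn0 : 0 ≤ n := by positivity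
  set X : ℝ := n ^ t * p ^ t.choose 2 with hX
  have hX0 : 0 ≤ X := by positivity
  have h1 : ∀ K ∈ R, K.card ∈ Finset.range t := fun K hK => Finset.mem_range.2 (hR K hK).2.1
  have hsum : ∑ K ∈ R, n ^ (t - K.card) * p ^ (t.choose 2 - K.card.choose 2)
      ≤ ((t - 1 : ℕ) : ℝ) * X := by
    rw [← Finset.sum_fiberwise_of_maps_to h1]
    have h2 : ∀ i ∈ Finset.range t,
        (∑ K ∈ R.filter (fun K => K.card = i),
          n ^ (t - K.card) * p ^ (t.choose 2 - K.card.choose 2)) ≤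
          (if i = 0 then 0 else X) := by
      intro i hi
      rcases Nat.eq_zero_or_pos i with hi0 | hi1
      · subst hi0
        have : R.filter (fun K => K.card = 0) = ∅ := by
          apply Finset.filter_false_of_mem
          intro K hK hc
          exact absurd hc (Finset.card_ne_zero_of_mem ((hR K hK).1.choose_spec))
        rw [this]; simp
      · have hilt : i < t := Finset.mem_range.1 hi
        have hfib : ∑ K ∈ R.filter (fun K => K.card = i),
            n ^ (t - K.card) * p ^ (t.choose 2 - K.card.choose 2) =
            ((R.filter (fun K => K.card = i)).card : ℝ) *
              (n ^ (t - i) * p ^ (t.choose 2 - i.choose 2)) := by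
          rw [Finset.sum_congr rfl (fun K hK => by
            rw [(Finset.mem_filter.1 hK).2]), Finset.sum_const, nsmul_eq_mul]
        rw [hfib, if_neg (by omega)]
        have hsubset : R.filter (fun K => K.card = i) ⊆ G.cliqueFinset i := by
          intro K hK
          obtain ⟨hKR, hKc⟩ := Finset.mem_filter.1 hK
          have := (hR K hKR).2.2.2
          rwa [hKc] at this
        have hcard : ((R.filter (fun K => K.card = i)).card : ℝ) ≤
            n ^ i * p ^ i.choose 2 := by
          refine le_trans ?_ (hKi i hi1 hilt)
          exact_mod_cast Finset.card_le_card hsubset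
        have hthr : (0:ℝ) ≤ n ^ (t - i) * p ^ (t.choose 2 - i.choose 2) := by positivity
        calc ((R.filter (fun K => K.card = i)).card : ℝ) *
              (n ^ (t - i) * p ^ (t.choose 2 - i.choose 2))
            ≤ (n ^ i * p ^ i.choose 2) * (n ^ (t - i) * p ^ (t.choose 2 - i.choose 2)) := by
              exact mul_le_mul_of_nonneg_right hcard hthr
          _ = X := by
              rw [hX, mul_mul_mul_comm, ← pow_add, ← pow_add,
                Nat.add_sub_cancel' hilt.le,
                Nat.add_sub_cancel' (Nat.choose_le_choose 2 hilt.le)]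
    refine le_trans (Finset.sum_le_sum h2) ?_
    obtain ⟨m, rfl⟩ : ∃ m, t = m + 1 := ⟨t - 1, by omega⟩
    rw [Finset.sum_range_succ']
    simp [Finset.sum_const]
  have htc : ((t - 1 : ℕ) : ℝ) = (t : ℝ) - 1 := by
    push_cast [Nat.cast_sub (by omega : 1 ≤ t)]; ring
  rw [htc] at hsum
  have : (t : ℝ) * X ≤ (T.card : ℝ) + ((t:ℝ) - 1) * X := by
    calc (t : ℝ) * X = (t : ℝ) * n ^ t * p ^ t.choose 2 := by rw [hX]; ring
      _ ≤ _ := le_trans hbound (by linarith)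
  linarith

theorem prune_aux {V : Type*} [Fintype V] [DecidableEq V]
    (G : SimpleGraph V) [DecidableRel G.Adj] (t : ℕ) (ht : 2 ≤ t) (p : ℝ) (hp : 0 < p)
    (hKi : ∀ i, 1 ≤ i → i < t →
      ((G.cliqueFinset i).card : ℝ) ≤ (Fintype.card V : ℝ) ^ i * p ^ i.choose 2) :
    ∀ N : ℕ, ∀ T R : Finset (Finset V), T.card ≤ N →
      T ⊆ G.cliqueFinset t →
      (∀ K ∈ R, K.Nonempty ∧ K.card < t ∧
        T.filter (fun L => K ⊆ L) = ∅ ∧ K ∈ G.cliqueFinset K.card) →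
      ((t : ℝ) * (Fintype.card V : ℝ) ^ t * p ^ t.choose 2 ≤
        (T.card : ℝ) + ∑ K ∈ R, (Fintype.card V : ℝ) ^ (t - K.card) *
          p ^ (t.choose 2 - K.card.choose 2)) →
      ∃ T', T' ⊆ T ∧
        (∀ K : Finset V, K.Nonempty → K.card < t →
          (T'.filter (fun L => K ⊆ L)).Nonempty →
          (Fintype.card V : ℝ) ^ (t - K.card) * p ^ (t.choose 2 - K.card.choose 2) ≤
            ((T'.filter (fun L => K ⊆ L)).card : ℝ)) ∧
        (Fintype.card V : ℝ) ^ t * p ^ t.choose 2 ≤ (T'.card : ℝ) := by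
  intro N
  induction N with
  | zero =>
    intro T R hTN hT hR hbound
    have hTe : T = ∅ := Finset.card_eq_zero.1 (Nat.le_zero.1 hTN)
    refine ⟨T, Finset.Subset.refl T, ?_, prune_terminal G t ht p hp hKi T R hR hbound⟩
    intro K _ _ hne
    exact absurd hne (by simp [hTe])
  | succ N ih =>
    intro T R hTN hT hR hbound
    by_cases hbad : ∃ K : Finset V, K.Nonempty ∧ K.card < t ∧
        (T.filter (fun L => K ⊆ L)).Nonempty ∧
        ((T.filter (fun L => K ⊆ L)).card : ℝ) <
          (Fintype.card V : ℝ) ^ (t - K.card) * p ^ (t.choose 2 - K.card.choose 2)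
    · obtain ⟨K, hKne, hKlt, hKfil, hKdeg⟩ := hbad
      set T₂ := T.filter (fun L => ¬ K ⊆ L) with hT₂
      have hcards : (T.filter (fun L => K ⊆ L)).card + T₂.card = T.card :=
        Finset.card_filter_add_card_filter_not _
      have hd1 : 1 ≤ (T.filter (fun L => K ⊆ L)).card := Finset.card_pos.2 hKfil
      have hT₂sub : T₂ ⊆ T := Finset.filter_subset _ _
      have hKclique : K ∈ G.cliqueFinset K.card := by
        obtain ⟨L, hL⟩ := hKfil
        obtain ⟨hLT, hKL⟩ := Finset.mem_filter.1 hL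
        have hLc := SimpleGraph.mem_cliqueFinset_iff.1 (hT hLT)
        exact SimpleGraph.mem_cliqueFinset_iff.2 ⟨hLc.isClique.subset (Finset.coe_subset.2 hKL), rfl⟩
      have hKnotR : K ∉ R := by
        intro hKR
        rw [(hR K hKR).2.2.1] at hKfil
        exact Finset.not_nonempty_empty hKfil
      have hR₂ : ∀ K' ∈ insert K R, K'.Nonempty ∧ K'.card < t ∧
          T₂.filter (fun L => K' ⊆ L) = ∅ ∧ K' ∈ G.cliqueFinset K'.card := by
        intro K' hK'
        rcases Finset.mem_insert.1 hK' with rfl | hK'R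
        · refine ⟨hKne, hKlt, ?_, hKclique⟩
          apply Finset.filter_false_of_mem
          intro L hL
          exact (Finset.mem_filter.1 hL).2
        · obtain ⟨h1, h2, h3, h4⟩ := hR K' hK'R
          refine ⟨h1, h2, ?_, h4⟩
          exact Finset.subset_empty.1 (h3 ▸ Finset.filter_subset_filter _ hT₂sub)
      have hsum : ∑ K' ∈ insert K R, (Fintype.card V : ℝ) ^ (t - K'.card) *
          p ^ (t.choose 2 - K'.card.choose 2) =
          (Fintype.card V : ℝ) ^ (t - K.card) * p ^ (t.choose 2 - K.card.choose 2) +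
          ∑ K' ∈ R, (Fintype.card V : ℝ) ^ (t - K'.card) *
            p ^ (t.choose 2 - K'.card.choose 2) := Finset.sum_insert hKnotR
      have hbound₂ : (t : ℝ) * (Fintype.card V : ℝ) ^ t * p ^ t.choose 2 ≤
          (T₂.card : ℝ) + ∑ K' ∈ insert K R, (Fintype.card V : ℝ) ^ (t - K'.card) *
            p ^ (t.choose 2 - K'.card.choose 2) := by
        rw [hsum]
        have hc : ((T.filter (fun L => K ⊆ L)).card : ℝ) + (T₂.card : ℝ) = (T.card : ℝ) := by
          exact_mod_cast hcards
        linarith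
      obtain ⟨T', hT'sub, hdeg, hcard⟩ := ih T₂ (insert K R)
        (by omega) (fun L hL => hT (hT₂sub hL)) hR₂ hbound₂
      exact ⟨T', hT'sub.trans hT₂sub, hdeg, hcard⟩
    · push_neg at hbad
      exact ⟨T, Finset.Subset.refl T, fun K h1 h2 h3 => hbad K h1 h2 h3,
        prune_terminal G t ht p hp hKi T R hR hbound⟩

theorem clique_complex_pruning {V : Type*} [Fintype V] [DecidableEq V]
    (G : SimpleGraph V) [DecidableRel G.Adj] (t : ℕ) (ht : 2 ≤ t) (p : ℝ) (hp : 0 < p)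
    (hKt : (t : ℝ) * (Fintype.card V : ℝ) ^ t * p ^ t.choose 2 ≤ (G.cliqueFinset t).card)
    (hKi : ∀ i, 1 ≤ i → i < t →
      ((G.cliqueFinset i).card : ℝ) ≤ (Fintype.card V : ℝ) ^ i * p ^ i.choose 2) :
    ∃ 𝒢' : Finset (Finset V),
      (∀ K ∈ 𝒢', K.Nonempty ∧ K.card ≤ t ∧ G.IsClique (K : Set V)) ∧
      (∀ K ∈ 𝒢', ∀ K' : Finset V, K' ⊆ K → K'.Nonempty → K' ∈ 𝒢') ∧
      (∀ i, i < t → ∀ K ∈ 𝒢', K.card = i →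
        (Fintype.card V : ℝ) ^ (t - i) * p ^ (t.choose 2 - i.choose 2) ≤
          ((𝒢'.filter (fun L => L.card = t ∧ K ⊆ L)).card : ℝ)) ∧
      (Fintype.card V : ℝ) ^ t * p ^ t.choose 2 ≤
        ((𝒢'.filter (fun L => L.card = t)).card : ℝ) := by
  obtain ⟨T', hT'sub, hdeg, hcard⟩ := prune_aux G t ht p hp hKi
    (G.cliqueFinset t).card (G.cliqueFinset t) ∅ le_rfl (Finset.Subset.refl _)
    (by simp) (by simpa using hKt)
  set 𝒢' : Finset (Finset V) :=
    T'.biUnion (fun L => L.powerset.filter (fun K => K.Nonempty)) with h𝒢'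
  have hmem : ∀ K : Finset V, K ∈ 𝒢' ↔ K.Nonempty ∧ ∃ L ∈ T', K ⊆ L := by
    intro K
    simp only [h𝒢', Finset.mem_biUnion, Finset.mem_filter, Finset.mem_powerset]
    tauto
  have hTclique : ∀ L ∈ T', G.IsNClique t L := fun L hL =>
    SimpleGraph.mem_cliqueFinset_iff.1 (hT'sub hL)
  have hTcard : ∀ L ∈ T', L.card = t := fun L hL => (hTclique L hL).card_eq
  have hT'mem : ∀ L ∈ T', L ∈ 𝒢' := by
    intro L hL
    exact (hmem L).2 ⟨Finset.card_pos.1 (by rw [hTcard L hL]; omega),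
      L, hL, Finset.Subset.refl L⟩
  have htop : 𝒢'.filter (fun L => L.card = t) = T' := by
    ext L
    simp only [Finset.mem_filter, hmem]
    constructor
    · rintro ⟨⟨hLne, M, hM, hLM⟩, hLt⟩
      have : L = M := Finset.eq_of_subset_of_card_le hLM (by rw [hTcard M hM, hLt])
      exact this ▸ hM
    · intro hL
      exact ⟨(hmem L).1 (hT'mem L hL), hTcard L hL⟩
  refine ⟨𝒢', ?_, ?_, ?_, ?_⟩
  · intro K hK
    obtain ⟨hKne, L, hL, hKL⟩ := (hmem K).1 hK
    refine ⟨hKne, ?_, ?_⟩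
    · rw [← hTcard L hL]; exact Finset.card_le_card hKL
    · exact (hTclique L hL).isClique.subset (Finset.coe_subset.2 hKL)
  · intro K hK K' hK'K hK'ne
    obtain ⟨hKne, L, hL, hKL⟩ := (hmem K).1 hK
    exact (hmem K').2 ⟨hK'ne, L, hL, hK'K.trans hKL⟩
  · intro i hi K hK hKi'
    obtain ⟨hKne, L, hL, hKL⟩ := (hmem K).1 hK
    have hfe : 𝒢'.filter (fun L => L.card = t ∧ K ⊆ L) = T'.filter (fun L => K ⊆ L) := by
      ext M
      simp only [Finset.mem_filter, hmem]
      constructor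
      · rintro ⟨⟨hMne, M', hM', hMM'⟩, hMt, hKM⟩
        have : M = M' := Finset.eq_of_subset_of_card_le hMM' (by rw [hTcard M' hM', hMt])
        exact ⟨this ▸ hM', hKM⟩
      · rintro ⟨hM, hKM⟩
        exact ⟨(hmem M).1 (hT'mem M hM), hTcard M hM, hKM⟩
    rw [hfe]
    have := hdeg K hKne (hKi' ▸ hi) ⟨L, Finset.mem_filter.2 ⟨hL, hKL⟩⟩
    rwa [hKi'] at this
  · rw [htop]; exact hcard
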